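/- Let B ≥ 1 and let a : ℕ → ℝ satisfy a_i < 0 for all i and |a_{i−1} + (3πi/2)^{2/3}| ≤ B for all i ≥ 1; define g(w) = ∑_{i∈ℕ} (1/(a_i − w) − 1/a_i) for w ∈ ℂ off the set {a_i} (the series converges absolutely there). Assume there exists c₀ ∈ ℝ such that for every θ with |θ| < 3π/4, g(r e^{iθ}) − c₀ − √(r e^{iθ}) → 0 as r → ∞. Let Y be a particle-generated Nevanlinna function with particle sequence x : ℕ → ℝ and constants b ∈ ℝ, c ≥ 0, and assume: (i) sup_{i} |x_i − a_i| < ∞; (ii) there exist θ₀ ∈ (0, 3π/4) and a sequence r_n → ∞ such that Y(r_n e^{iθ₀}) − √(r_n e^{iθ₀}) → 0. Then b and c are determined: for every w ∈ ℍ the series ∑_{i∈ℕ} (1/(x_i − w) − 1/a_i) converges absolutely and Y(w) = ∑_{i∈ℕ} (1/(x_i − w) − 1/a_i) − c₀. -/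

import Mathlib

open Filter Complex

set_option maxHeartbeats 3000000

private lemma stmt7_sq_le (u v : ℝ) (hu : 0 ≤ u) (hv : 0 ≤ v) (h : u^2 ≤ v^2) : u ≤ v := by
  nlinarith

theorem stmt_7
    (B : ℝ) (hB : 1 ≤ B)
    (a : ℕ → ℝ) (ha_neg : ∀ i, a i < 0)
    (ha : ∀ i : ℕ, 1 ≤ i →
      |a (i - 1) + (3 * Real.pi * i / 2) ^ ((2 : ℝ) / 3)| ≤ B)
    (g : ℂ → ℂ)
    (hgdef : ∀ w : ℂ, (∀ i : ℕ, w ≠ (a i : ℂ)) →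
      g w = ∑' i : ℕ, (((a i : ℂ) - w)⁻¹ - ((a i : ℂ))⁻¹))
    (c₀ : ℝ)
    (hg : ∀ θ : ℝ, |θ| < 3 * Real.pi / 4 →
      Filter.Tendsto
        (fun r : ℝ => g ((r : ℂ) * Complex.exp (θ * Complex.I)) - (c₀ : ℂ)
          - ((r : ℂ) * Complex.exp (θ * Complex.I)) ^ (1/2 : ℂ))
        Filter.atTop (nhds 0))
    (x : ℕ → ℝ) (b c : ℝ) (hc : 0 ≤ c)
    (hx : Summable fun i => 1 / (1 + (x i) ^ 2))
    (Y : ℂ → ℂ)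
    (hY : ∀ w : ℂ, 0 < w.im →
      Y w = (b : ℂ) + (c : ℂ) * w
        + ∑' i : ℕ, (((x i : ℂ) - w)⁻¹ - (x i : ℂ) / (1 + (x i : ℂ) ^ 2)))
    (hclose : ∃ M : ℝ, ∀ i : ℕ, |x i - a i| ≤ M)
    (hdir : ∃ θ₀ : ℝ, 0 < θ₀ ∧ θ₀ < 3 * Real.pi / 4 ∧
      ∃ r : ℕ → ℝ, Filter.Tendsto r Filter.atTop Filter.atTop ∧
        Filter.Tendsto
          (fun n : ℕ => Y ((r n : ℂ) * Complex.exp (θ₀ * Complex.I))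
            - ((r n : ℂ) * Complex.exp (θ₀ * Complex.I)) ^ (1/2 : ℂ))
          Filter.atTop (nhds 0)) :
    ∀ w : ℂ, 0 < w.im →
      Summable (fun i : ℕ => ‖((x i : ℂ) - w)⁻¹ - ((a i : ℂ))⁻¹‖) ∧
      Y w = (∑' i : ℕ, (((x i : ℂ) - w)⁻¹ - ((a i : ℂ))⁻¹)) - (c₀ : ℂ) := by
  obtain ⟨M0, hM0⟩ := hclose
  set M := max M0 0 with hMdef
  have hM : ∀ i, |x i - a i| ≤ M := fun i => (hM0 i).trans (le_max_left _ _)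
  have hMnn : 0 ≤ M := le_max_right _ _
  obtain ⟨θ₀, hθpos, hθlt, r, hrtop, hYlim⟩ := hdir
  have hπ : (0:ℝ) < Real.pi := Real.pi_pos
  have hs : 0 < Real.sin θ₀ := Real.sin_pos_of_pos_of_lt_pi hθpos (by linarith)
  -- |a i| → ∞
  have hx0 : Tendsto (fun i => 1/(1+(x i)^2)) atTop (nhds 0) := hx.tendsto_atTop_zero
  have hbig : ∀ C : ℝ, ∀ᶠ i in atTop, C ≤ |a i| := by
    intro C
    have hpos : (0:ℝ) < 1/(1+(|C|+M)^2) := by positivity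
    filter_upwards [hx0.eventually (gt_mem_nhds hpos)] with i hi
    have h1 : (0:ℝ) < 1 + (x i)^2 := by positivity
    have h2 : (0:ℝ) < 1 + (|C|+M)^2 := by positivity
    have hx2 : (|C|+M)^2 < (x i)^2 := by
      rw [div_lt_div_iff₀ h1 h2] at hi; nlinarith
    have h3 : |C| + M < |x i| := by
      nlinarith [abs_nonneg (x i), _root_.sq_abs (x i), abs_nonneg C]
    have h4 := abs_sub_abs_le_abs_sub (x i) (a i)
    calc C ≤ |C| := le_abs_self C
      _ ≤ |a i| := by linarith [hM i]
  -- summability of 1/(1+a²)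
  have hasum : Summable (fun i => 1/(1+(a i)^2)) := by
    apply Summable.of_nonneg_of_le (fun i => by positivity) (fun i => ?_)
      (hx.mul_left (2+2*M^2))
    have h1 : (0:ℝ) < 1+(a i)^2 := by positivity
    have h2 : (0:ℝ) < 1+(x i)^2 := by positivity
    have hsq : (x i - a i)^2 ≤ M^2 := by
      have := abs_le.mp (hM i); nlinarith [this.1, this.2]
    have key : 1+(x i)^2 ≤ (2+2*M^2)*(1+(a i)^2) := by
      nlinarith [hsq, sq_nonneg (2*a i - x i), sq_nonneg (M*a i), sq_nonneg M]
    rw [mul_one_div, div_le_div_iff₀ h1 h2]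
    nlinarith
  -- main summability lemma
  have hGsum : ∀ (y : ℕ → ℝ) (My : ℝ), 0 ≤ My → (∀ i, |y i - a i| ≤ My) →
      ∀ w : ℂ, 0 < w.im →
      Summable (fun i : ℕ => ‖((y i : ℂ) - w)⁻¹ - ((a i : ℂ))⁻¹‖) := by
    intro y My hMy hy w hw
    set W := ‖w‖ with hWdef
    have hWnn : 0 ≤ W := norm_nonneg w
    apply Summable.of_norm_bounded_eventually_nat
      (g := fun i => (4*(My+W)) * (1/(1+(a i)^2))) (hasum.mul_left _)
    filter_upwards [hbig (4*My + 4*W + 4)] with i hi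
    have hane : ((a i : ℂ)) ≠ 0 := by
      simp only [ne_eq, Complex.ofReal_eq_zero]; exact (ha_neg i).ne
    have hyw : ((y i : ℂ) - w) ≠ 0 := by
      intro h
      rw [sub_eq_zero] at h
      have h2 : w.im = 0 := by rw [← h]; simp
      linarith
    have hid : ((y i:ℂ) - w)⁻¹ - ((a i:ℂ))⁻¹
        = ((a i:ℂ) - (y i:ℂ) + w) * (((y i:ℂ) - w)⁻¹ * ((a i:ℂ))⁻¹) := by
      field_simp
      ring
    have hAy : |a i| - My ≤ |y i| := by
      have h1 := abs_sub_abs_le_abs_sub (a i) (y i)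
      have h2 := hy i
      rw [abs_sub_comm] at h2
      linarith
    have habs_yw : |a i| / 2 ≤ ‖(y i:ℂ) - w‖ := by
      have h1 : ‖(y i:ℂ)‖ - W ≤ ‖(y i:ℂ) - w‖ := by
        have := norm_sub_norm_le ((y i:ℂ)) w
        exact this
      rw [Complex.norm_real, Real.norm_eq_abs] at h1
      linarith
    have habs_num : ‖(a i:ℂ) - (y i:ℂ) + w‖ ≤ My + W := by
      calc ‖(a i:ℂ) - (y i:ℂ) + w‖
          ≤ ‖(a i:ℂ) - (y i:ℂ)‖ + W := norm_add_le _ _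
        _ ≤ My + W := by
            have : ((a i:ℂ) - (y i:ℂ)) = ((a i - y i : ℝ) : ℂ) := by push_cast; ring
            rw [this, Complex.norm_real, Real.norm_eq_abs, abs_sub_comm]
            have := hy i; linarith
    rw [Real.norm_eq_abs, _root_.abs_of_nonneg (norm_nonneg _), hid, norm_mul, norm_mul,
      norm_inv, norm_inv, Complex.norm_real, Real.norm_eq_abs]
    have hA1 : (1:ℝ) ≤ |a i| := by linarith
    have hApos : (0:ℝ) < |a i| := by linarith
    calc ‖(a i:ℂ) - (y i:ℂ) + w‖ * ((‖(y i:ℂ) - w‖)⁻¹ * (|a i|)⁻¹)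
        ≤ (My + W) * ((|a i|/2)⁻¹ * (|a i|)⁻¹) := by
          have hfac : (‖(y i:ℂ) - w‖)⁻¹ ≤ (|a i|/2)⁻¹ :=
            inv_anti₀ (by positivity) habs_yw
          exact mul_le_mul habs_num
            (mul_le_mul_of_nonneg_right hfac (by positivity)) (by positivity)
            (by linarith)
      _ ≤ (4*(My+W)) * (1/(1+(a i)^2)) := by
          have ha2 : (0:ℝ) < (a i)^2 := by nlinarith [_root_.sq_abs (a i)]
          have e1 : (|a i|/2)⁻¹ * (|a i|)⁻¹ = 2/(a i)^2 := by
            have h : a i * (a i)⁻¹ = 1 := mul_inv_cancel₀ (ha_neg i).ne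
            rw [← _root_.sq_abs (a i)]; field_simp
          rw [e1, mul_div_assoc', mul_one_div, div_le_div_iff₀ ha2 (by positivity)]
          nlinarith [mul_nonneg (add_nonneg hMy hWnn)
            (by nlinarith [_root_.sq_abs (a i)] : (0:ℝ) ≤ (a i)^2 - 1)]
  have hGsumC : ∀ (y : ℕ → ℝ) (My : ℝ), 0 ≤ My → (∀ i, |y i - a i| ≤ My) →
      ∀ w : ℂ, 0 < w.im →
      Summable (fun i : ℕ => ((y i : ℂ) - w)⁻¹ - ((a i : ℂ))⁻¹) :=
    fun y My h1 h2 w hw => Summable.of_norm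
      (by simpa using hGsum y My h1 h2 w hw)
  have haclose : ∀ i, |a i - a i| ≤ (0:ℝ) := fun i => by simp
  -- summability of the Nevanlinna series
  have hNsum : ∀ w : ℂ, 0 < w.im →
      Summable (fun i : ℕ => ((x i : ℂ) - w)⁻¹ - (x i : ℂ) / (1 + (x i : ℂ) ^ 2)) := by
    intro w hw
    set W := ‖w‖ with hWdef
    have hWnn : 0 ≤ W := norm_nonneg w
    apply Summable.of_norm_bounded_eventually_nat
      (g := fun i => (2+2*W) * (1/(1+(x i)^2))) (hx.mul_left _)
    filter_upwards [hbig (M + 2*W + 2)] with i hi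
    have hx1 : 2*W + 2 ≤ |x i| := by
      have h1 := abs_sub_abs_le_abs_sub (a i) (x i)
      have h2 := hM i
      rw [abs_sub_comm] at h2
      linarith
    have hxw : ((x i : ℂ) - w) ≠ 0 := by
      intro h
      rw [sub_eq_zero] at h
      have h2 : w.im = 0 := by rw [← h]; simp
      linarith
    have h1x : ((1:ℂ) + (x i:ℂ)^2) ≠ 0 := by
      have : ((1:ℂ) + (x i:ℂ)^2) = ((1 + (x i)^2 : ℝ) : ℂ) := by push_cast; ring
      rw [this]
      exact Complex.ofReal_ne_zero.mpr (by positivity)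
    have hid : ((x i:ℂ) - w)⁻¹ - (x i:ℂ)/(1+(x i:ℂ)^2)
        = (1 + (x i:ℂ)*w) * (((x i:ℂ) - w)⁻¹ * ((1:ℂ)+(x i:ℂ)^2)⁻¹) := by
      field_simp
      ring
    have habs_xw : |x i| / 2 ≤ ‖(x i:ℂ) - w‖ := by
      have h1 : ‖(x i:ℂ)‖ - W ≤ ‖(x i:ℂ) - w‖ := by
        have := norm_sub_norm_le ((x i:ℂ)) w
        exact this
      rw [Complex.norm_real, Real.norm_eq_abs] at h1
      linarith
    have habs_num : ‖1 + (x i:ℂ)*w‖ ≤ 1 + |x i| * W := by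
      calc ‖1 + (x i:ℂ)*w‖ ≤ ‖(1:ℂ)‖ + ‖(x i:ℂ)*w‖ :=
            norm_add_le _ _
        _ = 1 + |x i| * W := by rw [norm_one, norm_mul, Complex.norm_real, Real.norm_eq_abs]
    have habs_den : ‖(1:ℂ)+(x i:ℂ)^2‖ = 1 + (x i)^2 := by
      have : ((1:ℂ) + (x i:ℂ)^2) = ((1 + (x i)^2 : ℝ) : ℂ) := by push_cast; ring
      rw [this, Complex.norm_real, Real.norm_eq_abs, _root_.abs_of_nonneg (by positivity)]
    rw [hid, norm_mul, norm_mul, norm_inv, norm_inv, habs_den]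
    have hxpos : (0:ℝ) < |x i| := by linarith
    have hden : (0:ℝ) < 1 + (x i)^2 := by positivity
    calc ‖1 + (x i:ℂ)*w‖ * ((‖(x i:ℂ) - w‖)⁻¹ * (1 + (x i)^2)⁻¹)
        ≤ (1 + |x i| * W) * ((|x i|/2)⁻¹ * (1 + (x i)^2)⁻¹) := by
          have hfac : (‖(x i:ℂ) - w‖)⁻¹ ≤ (|x i|/2)⁻¹ :=
            inv_anti₀ (by positivity) habs_xw
          exact mul_le_mul habs_num
            (mul_le_mul_of_nonneg_right hfac (by positivity)) (by positivity)
            (by positivity)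
      _ ≤ (2+2*W) * (1/(1+(x i)^2)) := by
          have e1 : (|x i|/2)⁻¹ * (1 + (x i)^2)⁻¹ = 2/(|x i| * (1 + (x i)^2)) := by
            field_simp
          rw [e1, mul_div_assoc', mul_one_div,
            div_le_div_iff₀ (by positivity) (by positivity)]
          nlinarith [mul_nonneg hWnn (sq_nonneg (x i)), sq_nonneg (x i),
            mul_nonneg (mul_nonneg hWnn hxpos.le) (sq_nonneg (x i))]
  -- the constant S and K
  have hIim : (0:ℝ) < Complex.I.im := by simp
  have hNI := hNsum Complex.I hIim
  have hGI := hGsumC x M hMnn hM Complex.I hIim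
  have hsfsum : Summable (fun i : ℕ => ((a i:ℂ))⁻¹ - (x i : ℂ) / (1 + (x i : ℂ) ^ 2)) :=
    (hNI.sub hGI).congr (fun i => by ring)
  set S : ℂ := ∑' i : ℕ, (((a i:ℂ))⁻¹ - (x i : ℂ) / (1 + (x i : ℂ) ^ 2)) with hSdef
  set K : ℂ := (b:ℂ) + S with hKdef
  have hsplit : ∀ w : ℂ, 0 < w.im →
      Y w = (c:ℂ)*w + K + ∑' i : ℕ, (((x i:ℂ) - w)⁻¹ - ((a i:ℂ))⁻¹) := by
    intro w hw
    rw [hY w hw]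
    have h1 : (fun i : ℕ => ((x i:ℂ) - w)⁻¹ - (x i:ℂ)/(1+(x i:ℂ)^2))
        = fun i : ℕ => ((((x i:ℂ) - w)⁻¹ - ((a i:ℂ))⁻¹)
          + (((a i:ℂ))⁻¹ - (x i : ℂ) / (1 + (x i : ℂ) ^ 2))) := funext fun i => by ring
    rw [h1, Summable.tsum_add (hGsumC x M hMnn hM w hw) hsfsum, hKdef, hSdef]
    ring
  -- ray geometry
  set e : ℂ := Complex.exp ((θ₀:ℂ) * Complex.I) with hedef
  have he_re : e.re = Real.cos θ₀ := Complex.exp_ofReal_mul_I_re θ₀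
  have he_im : e.im = Real.sin θ₀ := Complex.exp_ofReal_mul_I_im θ₀
  have habse : ‖e‖ = 1 := Complex.norm_exp_ofReal_mul_I θ₀
  have hwim : ∀ ρ : ℝ, ((ρ:ℂ) * e).im = ρ * Real.sin θ₀ := by
    intro ρ
    rw [Complex.mul_im, Complex.ofReal_re, Complex.ofReal_im, he_im]
    ring
  have habs2 : ∀ p ρ : ℝ, (‖(p:ℂ) - (ρ:ℂ)*e‖)^2
      = (p - ρ*Real.cos θ₀)^2 + (ρ*Real.sin θ₀)^2 := by
    intro p ρ
    rw [Complex.sq_norm, Complex.normSq_apply]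
    simp [Complex.mul_re, Complex.mul_im, he_re, he_im]
    ring
  have hray2 : ∀ p ρ : ℝ, 0 ≤ ρ → ρ * Real.sin θ₀ ≤ ‖(p:ℂ) - (ρ:ℂ)*e‖ := by
    intro p ρ hρ
    have h1 : (ρ * Real.sin θ₀)^2 ≤ (‖(p:ℂ) - (ρ:ℂ)*e‖)^2 := by
      rw [habs2]
      nlinarith [sq_nonneg (p - ρ*Real.cos θ₀)]
    exact stmt7_sq_le _ _ (mul_nonneg hρ hs.le) (norm_nonneg _) h1
  have hray : ∀ p ρ : ℝ, 1 ≤ ρ →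
      (1+p^2) * (Real.sin θ₀)^2 / 2 ≤ (‖(p:ℂ) - (ρ:ℂ)*e‖)^2 := by
    intro p ρ hρ
    rw [habs2]
    have hid := Real.sin_sq_add_cos_sq θ₀
    have hidp : p^2*((Real.sin θ₀)^2 + (Real.cos θ₀)^2) = p^2*1 := by rw [hid]
    have h1 : p^2 * (Real.sin θ₀)^2 ≤ (p - ρ*Real.cos θ₀)^2 + (ρ*Real.sin θ₀)^2 := by
      nlinarith [sq_nonneg (p*Real.cos θ₀ - ρ), hidp]
    have h2 : (Real.sin θ₀)^2 ≤ (p - ρ*Real.cos θ₀)^2 + (ρ*Real.sin θ₀)^2 := by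
      nlinarith [sq_nonneg (p - ρ*Real.cos θ₀),
        mul_nonneg (by nlinarith : (0:ℝ) ≤ ρ^2 - 1) (sq_nonneg (Real.sin θ₀))]
    linarith
  have hwne : ∀ (p ρ : ℝ), 1 ≤ ρ → ((p:ℂ) - (ρ:ℂ)*e) ≠ 0 := by
    intro p ρ hρ h
    have h1 := hray2 p ρ (by linarith)
    rw [h, norm_zero] at h1
    nlinarith
  -- inverse along ray tends to 0
  have hinv0 : ∀ p : ℝ, Tendsto (fun n => ((p:ℂ) - ((r n:ℝ):ℂ)*e)⁻¹) atTop (nhds 0) := by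
    intro p
    rw [tendsto_zero_iff_norm_tendsto_zero]
    have hb : Tendsto (fun n => (r n * Real.sin θ₀)⁻¹) atTop (nhds 0) :=
      (hrtop.atTop_mul_const hs).inv_tendsto_atTop
    apply squeeze_zero' (Filter.Eventually.of_forall fun n => norm_nonneg _) ?_ hb
    filter_upwards [hrtop.eventually_ge_atTop 1] with n hn
    rw [norm_inv]
    exact inv_anti₀ (mul_pos (by linarith) hs) (hray2 p (r n) (by linarith))
  -- dominated convergence for the shift sum
  have hD : Tendsto
      (fun n => ∑' i : ℕ, (((x i:ℂ) - ((r n:ℝ):ℂ)*e)⁻¹ - ((a i:ℂ) - ((r n:ℝ):ℂ)*e)⁻¹))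
      atTop (nhds 0) := by
    have h0 : (0:ℂ) = ∑' _ : ℕ, (0:ℂ) := by simp
    rw [h0]
    apply tendsto_tsum_of_dominated_convergence
      (bound := fun i => (M/(Real.sin θ₀)^2) * (1/(1+(x i)^2) + 1/(1+(a i)^2)))
    · exact ((hx.add hasum).mul_left _)
    · intro i
      have := (hinv0 (x i)).sub (hinv0 (a i))
      simpa using this
    · filter_upwards [hrtop.eventually_ge_atTop 1] with n hn
      intro i
      have hxne := hwne (x i) (r n) hn
      have hane := hwne (a i) (r n) hn
      have hid : ((x i:ℂ) - ((r n:ℝ):ℂ)*e)⁻¹ - ((a i:ℂ) - ((r n:ℝ):ℂ)*e)⁻¹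
          = ((a i:ℂ) - (x i:ℂ)) *
            (((x i:ℂ) - ((r n:ℝ):ℂ)*e)⁻¹ * ((a i:ℂ) - ((r n:ℝ):ℂ)*e)⁻¹) := by
        field_simp
        ring
      set u := ‖(x i:ℂ) - ((r n:ℝ):ℂ)*e‖ with hudef
      set v := ‖(a i:ℂ) - ((r n:ℝ):ℂ)*e‖ with hvdef
      have hupos : 0 < u := by
        have := hray2 (x i) (r n) (by linarith)
        nlinarith [mul_pos (show (0:ℝ) < r n by linarith) hs]
      have hvpos : 0 < v := by
        have := hray2 (a i) (r n) (by linarith)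
        nlinarith [mul_pos (show (0:ℝ) < r n by linarith) hs]
      have hu2 : (1+(x i)^2) * (Real.sin θ₀)^2 / 2 ≤ u^2 := hray (x i) (r n) hn
      have hv2 : (1+(a i)^2) * (Real.sin θ₀)^2 / 2 ≤ v^2 := hray (a i) (r n) hn
      have habsax : ‖(a i:ℂ) - (x i:ℂ)‖ ≤ M := by
        have : ((a i:ℂ) - (x i:ℂ)) = ((a i - x i : ℝ) : ℂ) := by push_cast; ring
        rw [this, Complex.norm_real, Real.norm_eq_abs, abs_sub_comm]
        exact hM i
      rw [hid, norm_mul, norm_mul, norm_inv, norm_inv, ← hudef, ← hvdef]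
      have hAM : u⁻¹ * v⁻¹ ≤ (1/(Real.sin θ₀)^2) * (1/(1+(x i)^2) + 1/(1+(a i)^2)) := by
        have h1 : u⁻¹ * v⁻¹ = 1/(u*v) := by rw [one_div, mul_inv]
        have h2 : 1/(u*v) ≤ ((u^2)⁻¹ + (v^2)⁻¹)/2 := by
          rw [div_le_div_iff₀ (by positivity) (by norm_num), inv_eq_one_div, inv_eq_one_div,
            div_add_div _ _ (by positivity) (by positivity), div_mul_eq_mul_div,
            le_div_iff₀ (by positivity)]
          nlinarith [sq_nonneg (u - v), mul_pos hupos hvpos, sq_nonneg (u*v),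
            mul_pos (mul_pos hupos hupos) (mul_pos hvpos hvpos)]
        have h3 : (u^2)⁻¹ ≤ 2/((1+(x i)^2) * (Real.sin θ₀)^2) := by
          rw [← inv_div ((1+(x i)^2) * (Real.sin θ₀)^2) 2] at *
          exact inv_anti₀ (by positivity) hu2
        have h4 : (v^2)⁻¹ ≤ 2/((1+(a i)^2) * (Real.sin θ₀)^2) := by
          rw [← inv_div ((1+(a i)^2) * (Real.sin θ₀)^2) 2] at *
          exact inv_anti₀ (by positivity) hv2
        have h5 : (2/((1+(x i)^2) * (Real.sin θ₀)^2) + 2/((1+(a i)^2) * (Real.sin θ₀)^2))/2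
            = (1/(Real.sin θ₀)^2) * (1/(1+(x i)^2) + 1/(1+(a i)^2)) := by
          field_simp
        rw [h1]
        calc 1/(u*v) ≤ ((u^2)⁻¹ + (v^2)⁻¹)/2 := h2
          _ ≤ (2/((1+(x i)^2) * (Real.sin θ₀)^2) + 2/((1+(a i)^2) * (Real.sin θ₀)^2))/2 := by
              linarith
          _ = (1/(Real.sin θ₀)^2) * (1/(1+(x i)^2) + 1/(1+(a i)^2)) := h5
      calc ‖(a i:ℂ) - (x i:ℂ)‖ * (u⁻¹ * v⁻¹)
          ≤ M * ((1/(Real.sin θ₀)^2) * (1/(1+(x i)^2) + 1/(1+(a i)^2))) :=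
            mul_le_mul habsax hAM (by positivity) hMnn
        _ = (M/(Real.sin θ₀)^2) * (1/(1+(x i)^2) + 1/(1+(a i)^2)) := by ring
  -- limit of g along the ray
  have hθabs : |θ₀| < 3 * Real.pi / 4 := by rwa [_root_.abs_of_pos hθpos]
  have hglim : Tendsto (fun n => g (((r n:ℝ):ℂ)*e) - (c₀:ℂ) - (((r n:ℝ):ℂ)*e)^(1/2:ℂ))
      atTop (nhds 0) := (hg θ₀ hθabs).comp hrtop
  -- the key identity along the ray
  have hEq : (fun n => (c:ℂ) * (((r n:ℝ):ℂ)*e)) =ᶠ[atTop]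
      (fun n => (Y (((r n:ℝ):ℂ)*e) - (((r n:ℝ):ℂ)*e)^(1/2:ℂ))
        - (∑' i : ℕ, (((x i:ℂ) - ((r n:ℝ):ℂ)*e)⁻¹ - ((a i:ℂ) - ((r n:ℝ):ℂ)*e)⁻¹))
        - (g (((r n:ℝ):ℂ)*e) - (c₀:ℂ) - (((r n:ℝ):ℂ)*e)^(1/2:ℂ))
        - (K + (c₀:ℂ))) := by
    filter_upwards [hrtop.eventually_ge_atTop 1] with n hn
    have him : 0 < (((r n:ℝ):ℂ)*e).im := by
      rw [hwim]
      exact mul_pos (by linarith) hs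
    have hYw := hsplit _ him
    have hgw : g (((r n:ℝ):ℂ)*e)
        = ∑' i : ℕ, (((a i:ℂ) - ((r n:ℝ):ℂ)*e)⁻¹ - ((a i:ℂ))⁻¹) := by
      apply hgdef
      intro i h
      have h2 := congrArg Complex.im h
      rw [hwim] at h2
      simp only [Complex.ofReal_im] at h2
      nlinarith [mul_pos (show (0:ℝ) < r n by linarith) hs]
    have hsub : (∑' i : ℕ, (((x i:ℂ) - ((r n:ℝ):ℂ)*e)⁻¹ - ((a i:ℂ) - ((r n:ℝ):ℂ)*e)⁻¹))
        = (∑' i : ℕ, (((x i:ℂ) - ((r n:ℝ):ℂ)*e)⁻¹ - ((a i:ℂ))⁻¹))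
          - ∑' i : ℕ, (((a i:ℂ) - ((r n:ℝ):ℂ)*e)⁻¹ - ((a i:ℂ))⁻¹) := by
      rw [← Summable.tsum_sub (hGsumC x M hMnn hM _ him) (hGsumC a 0 le_rfl haclose _ him)]
      congr 1
      funext i
      ring
    rw [hYw, hgw, hsub]
    ring
  have hclim : Tendsto (fun n => (c:ℂ) * (((r n:ℝ):ℂ)*e)) atTop
      (nhds (0 - 0 - 0 - (K + (c₀:ℂ)))) := by
    refine Tendsto.congr' hEq.symm ?_
    exact ((hYlim.sub hD).sub hglim).sub tendsto_const_nhds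
  -- c = 0
  have hc0 : c = 0 := by
    by_contra hne
    have hcpos : 0 < c := lt_of_le_of_ne hc (Ne.symm hne)
    have h1 := hclim.norm
    have h2 : (fun n => ‖(c:ℂ) * (((r n:ℝ):ℂ)*e)‖) =ᶠ[atTop] (fun n => c * r n) := by
      filter_upwards [hrtop.eventually_ge_atTop 0] with n hn
      rw [norm_mul, norm_mul, habse, mul_one, Complex.norm_real,
        Complex.norm_real, Real.norm_eq_abs, Real.norm_eq_abs, _root_.abs_of_nonneg hc,
        _root_.abs_of_nonneg hn]
    have h3 : Tendsto (fun n => c * r n) atTop (nhds ‖(0:ℂ) - 0 - 0 - (K + (c₀:ℂ))‖) :=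
      Tendsto.congr' h2 h1
    have h4 : Tendsto (fun n => c * r n) atTop atTop := hrtop.const_mul_atTop hcpos
    exact not_tendsto_nhds_of_tendsto_atTop h4 _ h3
  -- K = -c₀
  have hK : K = -(c₀:ℂ) := by
    have h1 := hclim
    rw [hc0] at h1
    simp only [Complex.ofReal_zero, zero_mul] at h1
    have h2 := tendsto_nhds_unique h1 tendsto_const_nhds
    linear_combination -h2
  -- conclusion
  intro w hw
  refine ⟨hGsum x M hMnn hM w hw, ?_⟩
  rw [hsplit w hw, hc0, hK]
  push_cast
  ring
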